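/- Let T be a commutative ring, and suppose T' → ∏_{i} T_i is a ring homomorphism between T-algebras that becomes an isomorphism after tensoring with a field L over a subring. If m is a maximal ideal of T' such that the induced residual data is supported on a single factor, then the localization T'_m ⊗ L ≅ (T_i)_{m_i} ⊗ L for the unique factor T_i through which m factors. -/

import Mathlib

open scoped TensorProduct

lemma aux_isLoc (R : Type*) [CommRing R] (M : Submonoid R) (C : Type*) [CommRing C] [Algebra R C] :
    IsLocalization (Algebra.algebraMapSubmonoid C M) (C ⊗[R] Localization M) := by
  letI : Algebra (Localization M) (C ⊗[R] Localization M) := Algebra.TensorProduct.rightAlgebra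
  haveI : IsScalarTower R (Localization M) (C ⊗[R] Localization M) :=
    IsScalarTower.of_algebraMap_eq fun r => by
      simp [RingHom.algebraMap_toAlgebra, Algebra.TensorProduct.algebraMap_apply,
        Algebra.TensorProduct.includeRight_apply, ← Algebra.TensorProduct.algebraMap_apply']
  rw [← isLocalizedModule_iff_isLocalization,
    isLocalizedModule_iff_isBaseChange (S := M) (A := Localization M)]
  exact Algebra.IsPushout.out

lemma aux_part1 (A B₁ B₂ : Type*) [CommRing A] [CommRing B₁] [CommRing B₂]
    [Algebra A B₁] [Algebra A B₂]
    (T : Submonoid A)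
    (hiso : Function.Bijective
      (algebraMap (Localization T) (Localization T ⊗[A] (B₁ × B₂))))
    (m : Ideal A) [m.IsMaximal] :
    Nonempty ((Localization T ⊗[A] Localization m.primeCompl) ≃ₐ[Localization T]
        (Localization T ⊗[A]
          Localization (Submonoid.map (algebraMap A (B₁ × B₂)).toMonoidHom
            m.primeCompl))) := by
  set L := Localization T
  set B := B₁ × B₂
  set M := m.primeCompl
  have hS : Submonoid.map (algebraMap A B).toMonoidHom M = Algebra.algebraMapSubmonoid B M := rfl
  haveI := aux_isLoc A M B
  let e : L ≃ₐ[A] L ⊗[A] B :=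
    (AlgEquiv.ofBijective (Algebra.ofId L (L ⊗[A] B)) hiso).restrictScalars A
  let e₂ : Localization (Algebra.algebraMapSubmonoid B M) ≃ₐ[A] B ⊗[A] Localization M :=
    (IsLocalization.algEquiv (Algebra.algebraMapSubmonoid B M) _ _).restrictScalars A
  rw [hS]
  let F : L ⊗[A] Localization (Algebra.algebraMapSubmonoid B M) ≃ₐ[A] L ⊗[A] Localization M :=
    (Algebra.TensorProduct.congr (AlgEquiv.refl (R := A) (A₁ := L)) e₂).trans <|
      ((Algebra.TensorProduct.assoc A A A L B (Localization M)).symm).trans <|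
        Algebra.TensorProduct.congr e.symm AlgEquiv.refl
  have he : ∀ x : L, e x = x ⊗ₜ[A] (1 : B) := fun x => by
    simp [e, Algebra.ofId_apply, Algebra.TensorProduct.algebraMap_apply]
    rfl
  have hF : ∀ x : L, F (x ⊗ₜ[A] 1) = x ⊗ₜ[A] 1 := by
    intro x
    have h1 : (1 : B ⊗[A] Localization M) = (1 : B) ⊗ₜ[A] (1 : Localization M) := rfl
    simp only [F, AlgEquiv.trans_apply, Algebra.TensorProduct.congr_apply,
      Algebra.TensorProduct.map_tmul, AlgEquiv.coe_refl, AlgHom.coe_coe, id_eq, map_one, h1,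
      Algebra.TensorProduct.assoc_symm_tmul, AlgEquiv.refl_toAlgHom, AlgHom.id_apply]
    erw [show e.symm (x ⊗ₜ[A] (1:B)) = x from e.injective (by rw [AlgEquiv.apply_symm_apply, he])]
  exact ⟨AlgEquiv.ofRingEquiv (f := F.symm.toRingEquiv) fun x => by
    simp only [AlgEquiv.toRingEquiv_eq_coe, AlgEquiv.coe_ringEquiv,
      Algebra.TensorProduct.algebraMap_apply, Algebra.algebraMap_self, RingHom.id_apply]
    exact F.injective (by rw [AlgEquiv.apply_symm_apply, hF])⟩

lemma aux_part2 (A B₁ B₂ : Type*) [CommRing A] [CommRing B₁] [CommRing B₂]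
    [Algebra A B₁] [Algebra A B₂] (m : Ideal A) [m.IsMaximal] :
    Nonempty ((Localization (Submonoid.map (algebraMap A (B₁ × B₂)).toMonoidHom
          m.primeCompl)) ≃+*
        (Localization (Submonoid.map (algebraMap A B₁).toMonoidHom m.primeCompl)) ×
        (Localization (Submonoid.map (algebraMap A B₂).toMonoidHom m.primeCompl))) := by
  set M := m.primeCompl
  set S := Submonoid.map (algebraMap A (B₁ × B₂)).toMonoidHom M
  set S₁ := Submonoid.map (algebraMap A B₁).toMonoidHom M
  set S₂ := Submonoid.map (algebraMap A B₂).toMonoidHom M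
  set D := Localization S₁ × Localization S₂
  letI : Algebra (B₁ × B₂) D :=
    ((algebraMap B₁ (Localization S₁)).prodMap (algebraMap B₂ (Localization S₂))).toAlgebra
  haveI : IsLocalization S D := by
    constructor
    constructor
    · rintro ⟨s, a, ha, rfl⟩
      have h1 : IsUnit (algebraMap B₁ (Localization S₁) (algebraMap A B₁ a)) :=
        IsLocalization.map_units _ (⟨_, ⟨a, ha, rfl⟩⟩ : S₁)
      have h2 : IsUnit (algebraMap B₂ (Localization S₂) (algebraMap A B₂ a)) :=
        IsLocalization.map_units _ (⟨_, ⟨a, ha, rfl⟩⟩ : S₂)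
      obtain ⟨x', hx'⟩ := h1.exists_right_inv
      obtain ⟨y', hy'⟩ := h2.exists_right_inv
      exact IsUnit.of_mul_eq_one (x', y') (Prod.ext hx' hy')
    · rintro ⟨z₁, z₂⟩
      obtain ⟨⟨b₁, s₁⟩, h₁⟩ := IsLocalization.surj S₁ z₁
      obtain ⟨⟨b₂, s₂⟩, h₂⟩ := IsLocalization.surj S₂ z₂
      obtain ⟨a₁, ha₁, hs₁⟩ := s₁.2
      obtain ⟨a₂, ha₂, hs₂⟩ := s₂.2
      have hs₁' : algebraMap A B₁ a₁ = ↑s₁ := hs₁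
      have hs₂' : algebraMap A B₂ a₂ = ↑s₂ := hs₂
      have h₁' : z₁ * algebraMap B₁ (Localization S₁) (algebraMap A B₁ a₁)
          = algebraMap B₁ (Localization S₁) b₁ := by rw [hs₁']; exact h₁
      have h₂' : z₂ * algebraMap B₂ (Localization S₂) (algebraMap A B₂ a₂)
          = algebraMap B₂ (Localization S₂) b₂ := by rw [hs₂']; exact h₂
      refine ⟨⟨(b₁ * algebraMap A B₁ a₂, b₂ * algebraMap A B₂ a₁),
        ⟨algebraMap A (B₁ × B₂) (a₁ * a₂), ⟨a₁ * a₂, mul_mem ha₁ ha₂, rfl⟩⟩⟩, Prod.ext ?_ ?_⟩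
      · show z₁ * algebraMap B₁ (Localization S₁) (algebraMap A B₁ (a₁ * a₂))
          = algebraMap B₁ (Localization S₁) (b₁ * algebraMap A B₁ a₂)
        rw [map_mul, map_mul, map_mul]
        linear_combination (algebraMap B₁ (Localization S₁) (algebraMap A B₁ a₂)) * h₁'
      · show z₂ * algebraMap B₂ (Localization S₂) (algebraMap A B₂ (a₁ * a₂))
          = algebraMap B₂ (Localization S₂) (b₂ * algebraMap A B₂ a₁)
        rw [map_mul, map_mul, map_mul]
        linear_combination (algebraMap B₂ (Localization S₂) (algebraMap A B₂ a₁)) * h₂'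
    · rintro ⟨x₁, x₂⟩ ⟨y₁, y₂⟩ h
      rw [Prod.ext_iff] at h
      obtain ⟨h₁, h₂⟩ := h
      obtain ⟨c₁, hc₁⟩ := IsLocalization.exists_of_eq (M := S₁) (S := Localization S₁) h₁
      obtain ⟨c₂, hc₂⟩ := IsLocalization.exists_of_eq (M := S₂) (S := Localization S₂) h₂
      obtain ⟨a₁, ha₁, hs₁⟩ := c₁.2
      obtain ⟨a₂, ha₂, hs₂⟩ := c₂.2
      have hs₁' : algebraMap A B₁ a₁ = ↑c₁ := hs₁
      have hs₂' : algebraMap A B₂ a₂ = ↑c₂ := hs₂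
      have hc₁' : (c₁ : B₁) * x₁ = (c₁ : B₁) * y₁ := hc₁
      have hc₂' : (c₂ : B₂) * x₂ = (c₂ : B₂) * y₂ := hc₂
      refine ⟨⟨algebraMap A (B₁ × B₂) (a₁ * a₂), ⟨a₁ * a₂, mul_mem ha₁ ha₂, rfl⟩⟩, Prod.ext ?_ ?_⟩
      · show algebraMap A B₁ (a₁ * a₂) * x₁ = algebraMap A B₁ (a₁ * a₂) * y₁
        rw [map_mul, hs₁']
        linear_combination (algebraMap A B₁ a₂) * hc₁'
      · show algebraMap A B₂ (a₁ * a₂) * x₂ = algebraMap A B₂ (a₁ * a₂) * y₂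
        rw [map_mul, hs₂']
        linear_combination (algebraMap A B₂ a₁) * hc₂'
  exact ⟨(IsLocalization.algEquiv S (Localization S) D).toRingEquiv⟩

/-- Abstract form of the Hecke-algebra decomposition: let `φ : A → B₁ × B₂` be an
(injective) map of Noetherian rings which becomes an isomorphism after tensoring with
a localization `L = T⁻¹A`, and let `m` be a maximal ideal of `A`. Then the localized
map `A_m → (B₁ × B₂)_m` is an isomorphism after `⊗ L`, and the localization
`(B₁ × B₂)_m` decomposes as the product of the localizations `(B₁)_m × (B₂)_m`. -/
theorem stmt13 (A B₁ B₂ : Type*) [CommRing A] [CommRing B₁] [CommRing B₂]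
    [IsNoetherianRing A] [IsNoetherianRing B₁] [IsNoetherianRing B₂]
    [Algebra A B₁] [Algebra A B₂]
    (T : Submonoid A)
    (hinj : Function.Injective (algebraMap A (B₁ × B₂)))
    (hiso : Function.Bijective
      (algebraMap (Localization T) (Localization T ⊗[A] (B₁ × B₂))))
    (m : Ideal A) [m.IsMaximal] :
    Nonempty ((Localization T ⊗[A] Localization m.primeCompl) ≃ₐ[Localization T]
        (Localization T ⊗[A]
          Localization (Submonoid.map (algebraMap A (B₁ × B₂)).toMonoidHom
            m.primeCompl))) ∧
    Nonempty ((Localization (Submonoid.map (algebraMap A (B₁ × B₂)).toMonoidHom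
          m.primeCompl)) ≃+*
        (Localization (Submonoid.map (algebraMap A B₁).toMonoidHom m.primeCompl)) ×
        (Localization (Submonoid.map (algebraMap A B₂).toMonoidHom m.primeCompl))) :=
  ⟨aux_part1 A B₁ B₂ T hiso m, aux_part2 A B₁ B₂ m⟩
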